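/- arXiv:0809.1247 — 2 statements merged into one kernel-verified Lean document; each statement's English description precedes it below -/
import Mathlib

section
/- For all natural numbers m and n, the continued fraction [-1, -1, -2, ..., -2 (m times), -3, -2, ..., -2 (n times)] equals the continued fraction [m+1, n+2], i.e., both equal (m+1) - 1/(n+2) = ((m+1)(n+2) - 1)/(n+2). -/
/-- Continued fraction [a₁,...,a_k] = a₁ - 1/[a₂,...,a_k], with [a] = a. -/
def cf : List ℚ → ℚ
  | [] => 0
  | [a] => a
  | a :: l => a - 1 / cf l

lemma cf_cons (a b : ℚ) (l : List ℚ) : cf (a :: b :: l) = a - 1 / cf (b :: l) := rfl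

lemma step (a p q : ℚ) (hp : p ≠ 0) : a - 1 / (-p / q) = (a * p + q) / p := by
  rw [one_div_div, div_neg, sub_neg_eq_add]
  field_simp

lemma cf_A (n : ℕ) : cf ((-2) :: List.replicate n (-2)) = -(n + 2) / (n + 1) := by
  induction n with
  | zero => norm_num [cf]
  | succ k ih =>
      have h0 : (0 : ℚ) ≤ k := Nat.cast_nonneg k
      have hp : (k : ℚ) + 2 ≠ 0 := by positivity
      rw [List.replicate_succ, cf_cons, ih, step _ _ _ hp]
      push_cast
      rw [div_eq_div_iff hp (by positivity : (k : ℚ) + 1 + 1 ≠ 0)]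
      ring

lemma cf_B (n : ℕ) : cf ((-3) :: List.replicate n (-2)) = -(2 * n + 3) / (n + 1) := by
  cases n with
  | zero => norm_num [cf]
  | succ k =>
      have h0 : (0 : ℚ) ≤ k := Nat.cast_nonneg k
      have hp : (k : ℚ) + 2 ≠ 0 := by positivity
      rw [List.replicate_succ, cf_cons, cf_A, step _ _ _ hp]
      push_cast
      rw [div_eq_div_iff hp (by positivity : (k : ℚ) + 1 + 1 ≠ 0)]
      ring

lemma cf_C (m n : ℕ) :
    cf (List.replicate m (-2) ++ (-3) :: List.replicate n (-2))
      = -((m + 2) * n + 2 * m + 3) / ((m + 1) * n + 2 * m + 1) := by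
  induction m with
  | zero =>
      simp only [List.replicate_zero, List.nil_append, cf_B]
      push_cast; ring_nf
  | succ k ih =>
      rw [List.replicate_succ, List.cons_append]
      have hne : List.replicate k (-2 : ℚ) ++ (-3) :: List.replicate n (-2) ≠ [] := by
        simp
      obtain ⟨b, l, hbl⟩ := List.exists_cons_of_ne_nil hne
      have h0 : (0 : ℚ) ≤ k := Nat.cast_nonneg k
      have h0' : (0 : ℚ) ≤ n := Nat.cast_nonneg n
      have hp : ((k : ℚ) + 2) * n + 2 * k + 3 ≠ 0 := by positivity
      have hp' : ((k : ℚ) + 3) * n + 2 * k + 5 ≠ 0 := by positivity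
      rw [hbl, cf_cons, ← hbl, ih, step _ _ _ hp]
      push_cast
      rw [div_eq_div_iff hp (by positivity : ((k:ℚ) + 1 + 1) * n + 2 * (k + 1) + 1 ≠ 0)]
      ring

theorem stmt_0 (m n : ℕ) :
    cf ([-1, -1] ++ List.replicate m (-2) ++ [-3] ++ List.replicate n (-2))
      = ((m + 1) * (n + 2) - 1) / (n + 2) ∧
    cf ([-1, -1] ++ List.replicate m (-2) ++ [-3] ++ List.replicate n (-2))
      = (m + 1) - 1 / (n + 2) := by
  have hlist : [-1, -1] ++ List.replicate m (-2) ++ [-3] ++ List.replicate n (-2)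
      = (-1 : ℚ) :: (-1) :: (List.replicate m (-2) ++ (-3) :: List.replicate n (-2)) := by
    simp
  have hne : List.replicate m (-2 : ℚ) ++ (-3) :: List.replicate n (-2) ≠ [] := by simp
  obtain ⟨b, l, hbl⟩ := List.exists_cons_of_ne_nil hne
  have h0 : (0 : ℚ) ≤ m := Nat.cast_nonneg m
  have h0' : (0 : ℚ) ≤ n := Nat.cast_nonneg n
  have hp : ((m : ℚ) + 2) * n + 2 * m + 3 ≠ 0 := by positivity
  have h3 : (n : ℚ) + 2 ≠ 0 := by positivity
  have key : cf ([-1, -1] ++ List.replicate m (-2) ++ [-3] ++ List.replicate n (-2))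
      = ((m + 1) * (n + 2) - 1) / (n + 2) := by
    rw [hlist, hbl, cf_cons, cf_cons, ← hbl, cf_C, step _ _ _ hp]
    have h4 : ((-1 : ℚ) * (((m : ℚ) + 2) * n + 2 * m + 3) + ((m + 1) * n + 2 * m + 1))
          / (((m : ℚ) + 2) * n + 2 * m + 3)
        = -((n : ℚ) + 2) / (((m : ℚ) + 2) * n + 2 * m + 3) := by
      rw [div_eq_div_iff hp hp]; ring
    rw [h4, step _ _ _ h3, div_eq_div_iff h3 h3]
    ring
  refine ⟨key, ?_⟩
  rw [key]
  field_simp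
end

section
/- For every natural number n ≥ 1, the signature of the real symmetric 8×8 matrix G = [[2,-1,0,0,0,0,0,0],[-1,-1,1,0,0,1,0,0],[0,1,-2,1,0,0,0,0],[0,0,1,-2,1,0,0,0],[0,0,0,1,2,0,0,-3],[0,1,0,0,0,-2,1,0],[0,0,0,0,0,1,n+1,-n-2],[0,0,0,0,-3,0,-n-2,n+6]] is 0 (it has exactly 4 positive and 4 negative eigenvalues). -/
noncomputable def Goeritz (n : ℕ) : Matrix (Fin 8) (Fin 8) ℝ :=
  !![2, -1, 0, 0, 0, 0, 0, 0;
     -1, -1, 1, 0, 0, 1, 0, 0;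
     0, 1, -2, 1, 0, 0, 0, 0;
     0, 0, 1, -2, 1, 0, 0, 0;
     0, 0, 0, 1, 2, 0, 0, -3;
     0, 1, 0, 0, 0, -2, 1, 0;
     0, 0, 0, 0, 0, 1, (n : ℝ) + 1, -(n : ℝ) - 2;
     0, 0, 0, 0, -3, 0, -(n : ℝ) - 2, (n : ℝ) + 6]

open Matrix Finset

/-- Quadratic form of a hermitian real matrix in terms of its eigenvalues. -/
lemma quad_repr {A : Matrix (Fin 8) (Fin 8) ℝ} (hA : A.IsHermitian) (x : Fin 8 → ℝ) :
    x ⬝ᵥ (A *ᵥ x) =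
      ∑ i, hA.eigenvalues i *
        ((star (hA.eigenvectorUnitary : Matrix (Fin 8) (Fin 8) ℝ) *ᵥ x) i) ^ 2 := by
  set U := (hA.eigenvectorUnitary : Matrix (Fin 8) (Fin 8) ℝ) with hU
  have h : A = U * Matrix.diagonal hA.eigenvalues * star U := by
    have h0 := hA.spectral_theorem
    rw [RCLike.ofReal_real_eq_id, Function.id_comp] at h0
    exact h0
  conv_lhs => rw [h]
  rw [← Matrix.mulVec_mulVec, ← Matrix.mulVec_mulVec, Matrix.dotProduct_mulVec]
  have hx : x ᵥ* U = star U *ᵥ x := by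
    ext i
    simp [Matrix.vecMul, Matrix.mulVec, dotProduct, Matrix.conjTranspose_apply,
      Matrix.star_eq_conjTranspose, mul_comm]
  rw [hx]
  simp only [dotProduct, Matrix.mulVec_diagonal]
  exact Finset.sum_congr rfl fun i _ => by ring

/-- If a real symmetric matrix is positive definite on a 4-dimensional space of directions,
it has at least 4 positive eigenvalues. -/
lemma card_pos_ge {A : Matrix (Fin 8) (Fin 8) ℝ} (hA : A.IsHermitian)
    (v : Fin 4 → Fin 8 → ℝ)
    (hv : ∀ c : Fin 4 → ℝ, c ≠ 0 →
      0 < (∑ i, c i • v i) ⬝ᵥ (A *ᵥ (∑ i, c i • v i))) :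
    4 ≤ (Finset.univ.filter fun i => 0 < hA.eigenvalues i).card := by
  classical
  set S := Finset.univ.filter fun i => 0 < hA.eigenvalues i with hS
  set U := (hA.eigenvectorUnitary : Matrix (Fin 8) (Fin 8) ℝ) with hU
  set f : (Fin 4 → ℝ) →ₗ[ℝ] (Fin 8 → ℝ) := (Matrix.of fun j i => v i j).mulVecLin with hf'
  have hf : ∀ c, f c = ∑ i, c i • v i := by
    intro c; ext j
    simp [hf', Matrix.mulVecLin, Matrix.mulVec, dotProduct, Finset.sum_apply, mul_comm]
  set T : (Fin 4 → ℝ) →ₗ[ℝ] ({i // i ∈ S} → ℝ) :=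
    LinearMap.pi (fun i => (LinearMap.proj i.1).comp ((star U).mulVecLin.comp f)) with hT'
  by_cases hT : Function.Injective T
  · have h1 := LinearMap.finrank_le_finrank_of_injective hT
    rw [Module.finrank_fin_fun, Module.finrank_pi] at h1
    simpa [Fintype.card_coe] using h1
  · have hker : LinearMap.ker T ≠ ⊥ := fun h => hT (LinearMap.ker_eq_bot.mp h)
    obtain ⟨c, hcmem, hc0⟩ := Submodule.exists_mem_ne_zero_of_ne_bot hker
    have hc : T c = 0 := hcmem
    set x : Fin 8 → ℝ := ∑ i, c i • v i with hx
    have hQ := hv c hc0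
    have hrep := quad_repr hA x
    have key : ∀ i : Fin 8, hA.eigenvalues i * ((star U *ᵥ x) i) ^ 2 ≤ 0 := by
      intro i
      by_cases hi : 0 < hA.eigenvalues i
      · have hiS : i ∈ S := by simp [hS, hi]
        have h2 : (star U *ᵥ x) i = 0 := by
          have h3 := congrFun hc ⟨i, hiS⟩
          simp only [hT', LinearMap.pi_apply, LinearMap.coe_comp, Function.comp_apply,
            LinearMap.proj_apply, Matrix.mulVecLin_apply, hf, ← hx, Pi.zero_apply] at h3
          exact h3
        simp [h2]
      · push_neg at hi
        exact mul_nonpos_iff.mpr (Or.inr ⟨hi, sq_nonneg _⟩)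
    have : x ⬝ᵥ (A *ᵥ x) ≤ 0 := by
      rw [hrep]; exact Finset.sum_nonpos fun i _ => key i
    linarith [hQ]

/-- If a real symmetric matrix is negative definite on a 4-dimensional space of directions,
it has at least 4 negative eigenvalues. -/
lemma card_neg_ge {A : Matrix (Fin 8) (Fin 8) ℝ} (hA : A.IsHermitian)
    (v : Fin 4 → Fin 8 → ℝ)
    (hv : ∀ c : Fin 4 → ℝ, c ≠ 0 →
      (∑ i, c i • v i) ⬝ᵥ (A *ᵥ (∑ i, c i • v i)) < 0) :
    4 ≤ (Finset.univ.filter fun i => hA.eigenvalues i < 0).card := by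
  classical
  set S := Finset.univ.filter fun i => hA.eigenvalues i < 0 with hS
  set U := (hA.eigenvectorUnitary : Matrix (Fin 8) (Fin 8) ℝ) with hU
  set f : (Fin 4 → ℝ) →ₗ[ℝ] (Fin 8 → ℝ) := (Matrix.of fun j i => v i j).mulVecLin with hf'
  have hf : ∀ c, f c = ∑ i, c i • v i := by
    intro c; ext j
    simp [hf', Matrix.mulVecLin, Matrix.mulVec, dotProduct, Finset.sum_apply, mul_comm]
  set T : (Fin 4 → ℝ) →ₗ[ℝ] ({i // i ∈ S} → ℝ) :=
    LinearMap.pi (fun i => (LinearMap.proj i.1).comp ((star U).mulVecLin.comp f)) with hT'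
  by_cases hT : Function.Injective T
  · have h1 := LinearMap.finrank_le_finrank_of_injective hT
    rw [Module.finrank_fin_fun, Module.finrank_pi] at h1
    simpa [Fintype.card_coe] using h1
  · have hker : LinearMap.ker T ≠ ⊥ := fun h => hT (LinearMap.ker_eq_bot.mp h)
    obtain ⟨c, hcmem, hc0⟩ := Submodule.exists_mem_ne_zero_of_ne_bot hker
    have hc : T c = 0 := hcmem
    set x : Fin 8 → ℝ := ∑ i, c i • v i with hx
    have hQ := hv c hc0
    have hrep := quad_repr hA x
    have key : ∀ i : Fin 8, 0 ≤ hA.eigenvalues i * ((star U *ᵥ x) i) ^ 2 := by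
      intro i
      by_cases hi : hA.eigenvalues i < 0
      · have hiS : i ∈ S := by simp [hS, hi]
        have h2 : (star U *ᵥ x) i = 0 := by
          have h3 := congrFun hc ⟨i, hiS⟩
          simp only [hT', LinearMap.pi_apply, LinearMap.coe_comp, Function.comp_apply,
            LinearMap.proj_apply, Matrix.mulVecLin_apply, hf, ← hx, Pi.zero_apply] at h3
          exact h3
        simp [h2]
      · push_neg at hi
        exact mul_nonneg hi (sq_nonneg _)
    have : 0 ≤ x ⬝ᵥ (A *ᵥ x) := by
      rw [hrep]; exact Finset.sum_nonneg fun i _ => key i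
    linarith [hQ]

/-- Positive directions for the Goeritz matrix. -/
noncomputable def vP (n : ℕ) : Fin 4 → Fin 8 → ℝ :=
  ![![1, 0, 0, 0, 0, 0, 0, 0],
    ![1, 2, 3, 4, 5, 0, 0, 0],
    ![4, 8, 5, 2, -1, 7, 6, 0],
    ![14*(n : ℝ)+25, 28*(n : ℝ)+50, 22*(n : ℝ)+41, 16*(n : ℝ)+32,
      10*(n : ℝ)+23, 20*(n : ℝ)+34, 12*(n : ℝ)+18, 12*(n : ℝ)+26]]

/-- Negative directions for the Goeritz matrix. -/
noncomputable def vM : Fin 4 → Fin 8 → ℝ :=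
  ![![1, 2, 0, 0, 0, 0, 0, 0],
    ![1, 2, 3, 0, 0, 0, 0, 0],
    ![1, 2, 3, 4, 0, 0, 0, 0],
    ![4, 8, 5, 2, -1, 7, 0, 0]]

set_option maxHeartbeats 2000000 in
lemma quadP (n : ℕ) (c : Fin 4 → ℝ) :
    (∑ i, c i • vP n i) ⬝ᵥ (Goeritz n *ᵥ (∑ i, c i • vP n i)) =
      2*(c 0)^2 + 70*(c 1)^2 + (36*(n : ℝ)+78)*(c 2)^2
        + (26*(n : ℝ)+51)*(12*(n : ℝ)+26)*(c 3)^2 := by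
  rw [Fin.sum_univ_four]
  simp only [Goeritz, vP, Matrix.mulVec, dotProduct, Fin.sum_univ_succ,
    Finset.sum_apply, Pi.smul_apply, Pi.add_apply, smul_eq_mul, Fin.sum_univ_zero, add_zero,
    Matrix.cons_val', Matrix.cons_val_zero, Matrix.cons_val_one, Matrix.head_cons,
    Matrix.cons_val_two, Matrix.cons_val_three, Matrix.tail_cons,
    Matrix.empty_val', Matrix.cons_val_fin_one, Matrix.head_fin_const, Matrix.of_apply,
    Matrix.cons_val_succ]
  ring

set_option maxHeartbeats 2000000 in
lemma quadM (n : ℕ) (c : Fin 4 → ℝ) :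
    (∑ i, c i • vM i) ⬝ᵥ (Goeritz n *ᵥ (∑ i, c i • vM i)) =
      -6*(c 0)^2 - 12*(c 1)^2 - 20*(c 2)^2 - 42*(c 3)^2 := by
  rw [Fin.sum_univ_four]
  simp only [Goeritz, vM, Matrix.mulVec, dotProduct, Fin.sum_univ_succ,
    Finset.sum_apply, Pi.smul_apply, Pi.add_apply, smul_eq_mul, Fin.sum_univ_zero, add_zero,
    Matrix.cons_val', Matrix.cons_val_zero, Matrix.cons_val_one, Matrix.head_cons,
    Matrix.cons_val_two, Matrix.cons_val_three, Matrix.tail_cons,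
    Matrix.empty_val', Matrix.cons_val_fin_one, Matrix.head_fin_const, Matrix.of_apply,
    Matrix.cons_val_succ]
  ring

theorem stmt_11 (n : ℕ) (hn : 1 ≤ n) (hG : (Goeritz n).IsHermitian) :
    (Finset.univ.filter fun i => 0 < hG.eigenvalues i).card = 4 ∧
    (Finset.univ.filter fun i => hG.eigenvalues i < 0).card = 4 := by
  have hnR : (0 : ℝ) ≤ (n : ℝ) := Nat.cast_nonneg n
  have hp : 4 ≤ (Finset.univ.filter fun i => 0 < hG.eigenvalues i).card := by
    apply card_pos_ge hG (vP n)
    intro c hc0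
    rw [quadP]
    obtain ⟨i, hi⟩ := Function.ne_iff.mp hc0
    have t0 : (0:ℝ) ≤ 2*(c 0)^2 := by positivity
    have t1 : (0:ℝ) ≤ 70*(c 1)^2 := by positivity
    have t2 : (0:ℝ) ≤ (36*(n : ℝ)+78)*(c 2)^2 := by positivity
    have t3 : (0:ℝ) ≤ (26*(n : ℝ)+51)*(12*(n : ℝ)+26)*(c 3)^2 := by positivity
    fin_cases i <;> simp only [Pi.zero_apply] at hi
    · have : (0:ℝ) < 2*(c 0)^2 := by positivity
      linarith
    · have : (0:ℝ) < 70*(c 1)^2 := by positivity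
      linarith
    · have : (0:ℝ) < (36*(n : ℝ)+78)*(c 2)^2 := by positivity
      linarith
    · have : (0:ℝ) < (26*(n : ℝ)+51)*(12*(n : ℝ)+26)*(c 3)^2 := by positivity
      linarith
  have hq : 4 ≤ (Finset.univ.filter fun i => hG.eigenvalues i < 0).card := by
    apply card_neg_ge hG vM
    intro c hc0
    rw [quadM]
    obtain ⟨i, hi⟩ := Function.ne_iff.mp hc0
    have t0 : (0:ℝ) ≤ 6*(c 0)^2 := by positivity
    have t1 : (0:ℝ) ≤ 12*(c 1)^2 := by positivity
    have t2 : (0:ℝ) ≤ 20*(c 2)^2 := by positivity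
    have t3 : (0:ℝ) ≤ 42*(c 3)^2 := by positivity
    fin_cases i <;> simp only [Pi.zero_apply] at hi
    · have : (0:ℝ) < 6*(c 0)^2 := by positivity
      linarith
    · have : (0:ℝ) < 12*(c 1)^2 := by positivity
      linarith
    · have : (0:ℝ) < 20*(c 2)^2 := by positivity
      linarith
    · have : (0:ℝ) < 42*(c 3)^2 := by positivity
      linarith
  have hdisj : Disjoint (Finset.univ.filter fun i => 0 < hG.eigenvalues i)
      (Finset.univ.filter fun i => hG.eigenvalues i < 0) := by
    rw [Finset.disjoint_filter]
    intro i _ h1 h2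
    linarith
  have hsum : (Finset.univ.filter fun i => 0 < hG.eigenvalues i).card
      + (Finset.univ.filter fun i => hG.eigenvalues i < 0).card ≤ 8 := by
    rw [← Finset.card_union_of_disjoint hdisj]
    calc _ ≤ (Finset.univ : Finset (Fin 8)).card := Finset.card_le_univ _
    _ = 8 := by simp
  omega
end
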